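/- Let k be an algebraically closed field of characteristic 2, a, b ∈ k with b ≠ 0. The solutions (b0, b1, c1, e1) ∈ k^4 of the system e1^2 = c1^7, e1^2 = c1^5, c1 b1^4 + a c1^3 b1^2 + b c1^4 b1 = 0, e1^2 + a c1^3 b0^2 + c1^3 = 0, c1 b0^4 = 0, with c1 ≠ 0, e1 ≠ 0 are exactly: c1 = e1 = 1, b0 = 0, and b1 either 0 or a root of z^3 + a z + b = 0. In particular there are exactly 4 solutions. -/

import Mathlib

open Polynomial

/-- The solutions of the system arising in computing `Aut(X) ≅ (ℤ/2ℤ)³` for classical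
Enriques surfaces of type `D₄+D₄` (`y² = tx⁴ + at³x² + bt⁴x + t³ + t⁷`, `b ≠ 0`):
the solutions `(b₀, b₁, c₁, e₁)` with `c₁ ≠ 0`, `e₁ ≠ 0` are exactly `c₁ = e₁ = 1`,
`b₀ = 0`, and `b₁` either `0` or a root of `z³ + az + b = 0`; there are exactly 4. -/
theorem D4D4_classical_aut_system (k : Type*) [Field k] [IsAlgClosed k] [CharP k 2]
    (a b : k) (hb : b ≠ 0) :
    (∀ b0 b1 c1 e1 : k, c1 ≠ 0 → e1 ≠ 0 →
      ((e1 ^ 2 = c1 ^ 7 ∧ e1 ^ 2 = c1 ^ 5 ∧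
        c1 * b1 ^ 4 + a * c1 ^ 3 * b1 ^ 2 + b * c1 ^ 4 * b1 = 0 ∧
        e1 ^ 2 + a * c1 ^ 3 * b0 ^ 2 + c1 ^ 3 = 0 ∧
        c1 * b0 ^ 4 = 0) ↔
       (c1 = 1 ∧ e1 = 1 ∧ b0 = 0 ∧ (b1 = 0 ∨ b1 ^ 3 + a * b1 + b = 0)))) ∧
    Set.ncard {p : k × k × k × k |
        p.2.2.1 ≠ 0 ∧ p.2.2.2 ≠ 0 ∧
        p.2.2.2 ^ 2 = p.2.2.1 ^ 7 ∧ p.2.2.2 ^ 2 = p.2.2.1 ^ 5 ∧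
        p.2.2.1 * p.2.1 ^ 4 + a * p.2.2.1 ^ 3 * p.2.1 ^ 2
          + b * p.2.2.1 ^ 4 * p.2.1 = 0 ∧
        p.2.2.2 ^ 2 + a * p.2.2.1 ^ 3 * p.1 ^ 2 + p.2.2.1 ^ 3 = 0 ∧
        p.2.2.1 * p.1 ^ 4 = 0} = 4 := by
  have two : (2 : k) = 0 := by
    have := CharP.cast_eq_zero k 2; simpa using this
  have sq1 : ∀ x : k, x ^ 2 = 1 → x = 1 := by
    intro x hx
    have h : (x - 1) ^ 2 = 0 := by linear_combination hx + (1 - x) * two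
    have h2 : x - 1 = 0 := pow_eq_zero_iff (n := 2) (by norm_num) |>.mp h
    exact sub_eq_zero.mp h2
  have main : ∀ b0 b1 c1 e1 : k, c1 ≠ 0 → e1 ≠ 0 →
      ((e1 ^ 2 = c1 ^ 7 ∧ e1 ^ 2 = c1 ^ 5 ∧
        c1 * b1 ^ 4 + a * c1 ^ 3 * b1 ^ 2 + b * c1 ^ 4 * b1 = 0 ∧
        e1 ^ 2 + a * c1 ^ 3 * b0 ^ 2 + c1 ^ 3 = 0 ∧
        c1 * b0 ^ 4 = 0) ↔
       (c1 = 1 ∧ e1 = 1 ∧ b0 = 0 ∧ (b1 = 0 ∨ b1 ^ 3 + a * b1 + b = 0))) := by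
    intro b0 b1 c1 e1 hc he
    constructor
    · rintro ⟨h1, h2, h3, h4, h5⟩
      have hc1 : c1 = 1 := by
        apply sq1
        have hmul : c1 ^ 5 * (c1 ^ 2 - 1) = 0 := by linear_combination h2 - h1
        rcases mul_eq_zero.mp hmul with h | h
        · exact absurd (pow_eq_zero_iff (by norm_num) |>.mp h) hc
        · exact sub_eq_zero.mp h
      subst hc1
      have he1 : e1 = 1 := sq1 _ (by simpa using h2)
      have hb0 : b0 = 0 := by
        have h : b0 ^ 4 = 0 := by simpa using h5
        exact pow_eq_zero_iff (by norm_num) |>.mp h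
      refine ⟨rfl, he1, hb0, ?_⟩
      have h : b1 * (b1 ^ 3 + a * b1 + b) = 0 := by linear_combination h3
      exact mul_eq_zero.mp h
    · rintro ⟨hc1, he1, hb0, hb1⟩
      subst hc1; subst he1; subst hb0
      refine ⟨by ring, by ring, ?_, by linear_combination two, by ring⟩
      rcases hb1 with h | h
      · subst h; ring
      · linear_combination b1 * h
  refine ⟨main, ?_⟩
  set q : k[X] := X ^ 4 + C a * X ^ 2 + C b * X with hq
  have hqd : q.natDegree = 4 := by rw [hq]; compute_degree!
  have hq0 : q ≠ 0 := fun h => by simp [h] at hqd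
  have hder : derivative q = C b := by
    rw [hq]
    have four : (4 : k) = 0 := by linear_combination 2 * two
    simp [derivative_pow, two, four]
  have hsep : q.Separable := by
    rw [Polynomial.separable_def, hder]
    exact ⟨0, C b⁻¹, by rw [← C_mul, inv_mul_cancel₀ hb]; simp⟩
  have hcard : Fintype.card (q.rootSet k) = 4 := by
    rw [Polynomial.card_rootSet_eq_natDegree hsep (IsAlgClosed.splits_domain q), hqd]
  have hQ : {z : k | z = 0 ∨ z ^ 3 + a * z + b = 0} = q.rootSet k := by
    ext z
    rw [Polynomial.mem_rootSet]
    simp only [Set.mem_setOf_eq, hq, map_add, map_mul, aeval_X, aeval_C, map_pow, Algebra.algebraMap_self, RingHom.id_apply]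
    constructor
    · rintro h
      refine ⟨hq0, ?_⟩
      rcases h with h | h
      · subst h; ring
      · linear_combination z * h
    · rintro ⟨-, h⟩
      have hm : z * (z ^ 3 + a * z + b) = 0 := by linear_combination h
      exact mul_eq_zero.mp hm
  have hinj : Function.Injective (fun z : k => ((0 : k), z, (1 : k), (1 : k))) := by
    intro x y h
    simpa using h
  have himg : {p : k × k × k × k |
        p.2.2.1 ≠ 0 ∧ p.2.2.2 ≠ 0 ∧
        p.2.2.2 ^ 2 = p.2.2.1 ^ 7 ∧ p.2.2.2 ^ 2 = p.2.2.1 ^ 5 ∧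
        p.2.2.1 * p.2.1 ^ 4 + a * p.2.2.1 ^ 3 * p.2.1 ^ 2
          + b * p.2.2.1 ^ 4 * p.2.1 = 0 ∧
        p.2.2.2 ^ 2 + a * p.2.2.1 ^ 3 * p.1 ^ 2 + p.2.2.1 ^ 3 = 0 ∧
        p.2.2.1 * p.1 ^ 4 = 0} =
      (fun z : k => ((0 : k), z, (1 : k), (1 : k))) '' (q.rootSet k) := by
    ext ⟨b0, b1, c1, e1⟩
    simp only [Set.mem_setOf_eq, Set.mem_image, Prod.mk.injEq]
    constructor
    · rintro ⟨hc, he, h1, h2, h3, h4, h5⟩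
      obtain ⟨hc1, he1, hb0, hb1⟩ := (main b0 b1 c1 e1 hc he).mp ⟨h1, h2, h3, h4, h5⟩
      refine ⟨b1, ?_, hb0.symm, rfl, hc1.symm, he1.symm⟩
      rw [← hQ]; exact hb1
    · rintro ⟨z, hz, rfl, rfl, rfl, rfl⟩
      rw [← hQ] at hz
      obtain ⟨h1, h2, h3, h4, h5⟩ := (main 0 z 1 1 one_ne_zero one_ne_zero).mpr ⟨rfl, rfl, rfl, hz⟩
      exact ⟨one_ne_zero, one_ne_zero, h1, h2, h3, h4, h5⟩
  rw [himg, Set.ncard_image_of_injective _ hinj]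
  rw [Set.ncard_eq_toFinset_card', Set.toFinset_card, hcard]
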